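/- The field F fully characterizes the gauge orbit of the gauge field: for any A, A' : ℤ² → Z₂ × Z₂ with F_A = F_{A'}, there exists φ : ℤ² → Z₂ such that G_φ A = A'. -/

import Mathlib

/-- Gauge action on the gauge field A = (A_r, A_l). -/
def GA (φ : ℤ × ℤ → ZMod 2) (A : ℤ × ℤ → ZMod 2 × ZMod 2) : ℤ × ℤ → ZMod 2 × ZMod 2 :=
  fun p => ((A p).1 + φ (p.1, p.2 + 1) - φ (p.1 - 1, p.2),
            (A p).2 + φ (p.1, p.2 + 1) - φ (p.1 + 1, p.2))

/-- F_A = Δ_r A_l − Δ_l A_r. -/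
def Ffield (A : ℤ × ℤ → ZMod 2 × ZMod 2) : ℤ × ℤ → ZMod 2 :=
  fun p => ((A (p.1, p.2 + 1)).2 - (A (p.1 - 1, p.2)).2)
         - ((A (p.1, p.2 + 1)).1 - (A (p.1 + 1, p.2)).1)

namespace Stmt6Aux

/-- Two-sided partial sum over ℤ (signs irrelevant in char 2). -/
noncomputable def twoSum (c : ℤ → ZMod 2) (k : ℤ) : ZMod 2 :=
  ∑ j ∈ Finset.Ico (min k 0) (max k 0), c j

lemma twoSum_step (c : ℤ → ZMod 2) (k : ℤ) : twoSum c (k + 1) + twoSum c k = c k := by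
  have key2 : ∀ a b : ZMod 2, (a + b) + a = b := by decide
  have key2' : ∀ a b : ZMod 2, a + (b + a) = b := by decide
  have hsing : Finset.Ico k (k+1) = {k} := by
    ext j; simp only [Finset.mem_Ico, Finset.mem_singleton]; omega
  rcases le_or_gt 0 k with hk | hk
  · unfold twoSum
    rw [min_eq_right (by omega : (0:ℤ) ≤ k + 1), min_eq_right hk,
        max_eq_left (by omega : (0:ℤ) ≤ k + 1), max_eq_left hk,
        ← Finset.Ico_union_Ico_eq_Ico hk (by omega : k ≤ k + 1),
        Finset.sum_union (Finset.Ico_disjoint_Ico_consecutive 0 k (k+1)),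
        hsing, Finset.sum_singleton]
    exact key2 _ _
  · unfold twoSum
    rw [min_eq_left (by omega : k + 1 ≤ (0:ℤ)), min_eq_left (by omega : k ≤ (0:ℤ)),
        max_eq_right (by omega : k + 1 ≤ (0:ℤ)), max_eq_right (by omega : k ≤ (0:ℤ)),
        ← Finset.Ico_union_Ico_eq_Ico (by omega : k ≤ k + 1) (by omega : k + 1 ≤ (0:ℤ)),
        Finset.sum_union (Finset.Ico_disjoint_Ico_consecutive k (k+1) 0),
        hsing, Finset.sum_singleton]
    exact key2' _ _

def d (br bl : ℤ → ℤ → ZMod 2) (x : ℤ) : ZMod 2 := br x 0 + bl x 0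

/-- Initial time slice. -/
noncomputable def g (br bl : ℤ → ℤ → ZMod 2) (x : ℤ) : ZMod 2 :=
  if x % 2 = 0 then twoSum (fun k => d br bl (2*k+1)) (x/2)
  else twoSum (fun k => d br bl (2*k+2)) (x/2)

lemma gC (br bl : ℤ → ℤ → ZMod 2) (x : ℤ) :
    g br bl (x+1) + g br bl (x-1) = d br bl x := by
  rcases Int.even_or_odd x with ⟨k, hk⟩ | ⟨k, hk⟩
  · subst hk
    simp only [g]
    rw [if_neg (by omega : ¬ ((k + k + 1) % 2 = 0)),
        if_neg (by omega : ¬ ((k + k - 1) % 2 = 0)),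
        (by omega : (k + k + 1)/2 = k), (by omega : (k + k - 1)/2 = k - 1)]
    have h := twoSum_step (fun j => d br bl (2*j+2)) (k-1)
    rw [(by ring : k - 1 + 1 = k), (by ring : 2*(k-1)+2 = k + k)] at h
    exact h
  · subst hk
    simp only [g]
    rw [if_pos (by omega : (2*k + 1 + 1) % 2 = 0),
        if_pos (by omega : (2*k + 1 - 1) % 2 = 0),
        (by omega : (2*k + 1 + 1)/2 = k + 1), (by omega : (2*k + 1 - 1)/2 = k)]
    have h := twoSum_step (fun j => d br bl (2*j+1)) k
    exact h

noncomputable def Snat (br bl : ℤ → ℤ → ZMod 2) : ℕ → ℤ → ZMod 2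
  | 0 => g br bl
  | n+1 => fun x => Snat br bl n (x-1) + br x (n : ℤ)

noncomputable def Sneg (br bl : ℤ → ℤ → ZMod 2) : ℕ → ℤ → ZMod 2
  | 0 => g br bl
  | m+1 => fun x => Sneg br bl m (x+1) + br (x+1) (-(m : ℤ) - 1)

noncomputable def S (br bl : ℤ → ℤ → ZMod 2) : ℤ → ℤ → ZMod 2
  | Int.ofNat n => Snat br bl n
  | Int.negSucc m => Sneg br bl (m+1)

lemma R (br bl : ℤ → ℤ → ZMod 2) (t x : ℤ) :
    S br bl (t+1) x = S br bl t (x-1) + br x t := by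
  have key2b : ∀ a b : ZMod 2, a = (a + b) + b := by decide
  cases t with
  | ofNat n =>
    rw [show (Int.ofNat n : ℤ) + 1 = Int.ofNat (n+1) from rfl]
    rfl
  | negSucc m =>
    cases m with
    | zero =>
      rw [show Int.negSucc 0 + 1 = (0:ℤ) from rfl]
      show g br bl x = Sneg br bl 1 (x-1) + br x (Int.negSucc 0)
      show g br bl x = (g br bl (x-1+1) + br (x-1+1) (-((0:ℕ):ℤ) - 1)) + br x (Int.negSucc 0)
      rw [show x - 1 + 1 = x by ring, show (-((0:ℕ):ℤ) - 1) = Int.negSucc 0 by decide]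
      exact key2b _ _
    | succ m =>
      rw [show Int.negSucc (m+1) + 1 = Int.negSucc m by
        rw [Int.negSucc_eq, Int.negSucc_eq]; push_cast; ring]
      show Sneg br bl (m+1) x = Sneg br bl (m+2) (x-1) + br x (Int.negSucc (m+1))
      show Sneg br bl (m+1) x
        = (Sneg br bl (m+1) (x-1+1) + br (x-1+1) (-((m+1 : ℕ):ℤ) - 1)) + br x (Int.negSucc (m+1))
      rw [show x - 1 + 1 = x by ring,
          show (-((m+1 : ℕ):ℤ) - 1) = Int.negSucc (m+1) by rw [Int.negSucc_eq]; push_cast; ring]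
      exact key2b _ _

lemma Cinv (br bl : ℤ → ℤ → ZMod 2)
    (hF : ∀ x t : ℤ, bl x (t+1) + bl (x-1) t + br x (t+1) + br (x+1) t = 0)
    (t : ℤ) : ∀ x : ℤ, S br bl t (x+1) + S br bl t (x-1) = br x t + bl x t := by
  have keyP : ∀ s1 s2 sx sxm2 brp brm blm brx blx : ZMod 2,
      s1 = sx + brp → s2 = sxm2 + brm → sx + sxm2 = brm + blm →
      blx + blm + brx + brp = 0 → s1 + s2 = brx + blx := by decide
  have keyQ : ∀ a b sp sm r2 rx q1 q2 lx : ZMod 2,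
      a = sp + r2 → b = sm + rx → a + b = q1 + q2 →
      q2 + lx + q1 + r2 = 0 → sp + sm = rx + lx := by decide
  induction t using Int.induction_on with
  | zero =>
    intro x
    have h0 : S br bl 0 = g br bl := rfl
    rw [h0]
    exact gC br bl x
  | succ n ih =>
    intro x
    have h1 := R br bl n (x+1)
    rw [show x+1-1 = x by ring] at h1
    have h2 := R br bl n (x-1)
    rw [show x-1-1 = x-2 by ring] at h2
    have h3 := ih (x-1)
    rw [show x-1+1 = x by ring, show x-1-1 = x-2 by ring] at h3
    have h4 := hF x n
    exact keyP _ _ _ _ _ _ _ _ _ h1 h2 h3 h4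
  | pred i ih =>
    intro x
    have h1 := R br bl (-(i:ℤ) - 1) (x+2)
    rw [show (-(i:ℤ) - 1 + 1) = -(i:ℤ) by ring, show x+2-1 = x+1 by ring] at h1
    have h2 := R br bl (-(i:ℤ) - 1) x
    rw [show (-(i:ℤ) - 1 + 1) = -(i:ℤ) by ring] at h2
    have h3 := ih (x+1)
    rw [show x+1+1 = x+2 by ring, show x+1-1 = x by ring] at h3
    have h4 := hF (x+1) (-(i:ℤ) - 1)
    rw [show (-(i:ℤ) - 1 + 1) = -(i:ℤ) by ring, show x+1-1 = x by ring,
        show x+1+1 = x+2 by ring] at h4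
    exact keyQ _ _ _ _ _ _ _ _ _ h1 h2 h3 h4

end Stmt6Aux

open Stmt6Aux in
theorem stmt_6 (A A' : ℤ × ℤ → ZMod 2 × ZMod 2) (h : Ffield A = Ffield A') :
    ∃ φ : ℤ × ℤ → ZMod 2, GA φ A = A' := by
  have keyF : ∀ a2 b2 a1 c1 a2' b2' a1' c1' : ZMod 2,
      a2 - b2 - (a1 - c1) = a2' - b2' - (a1' - c1') →
      (a2' - a2) + (b2' - b2) + (a1' - a1) + (c1' - c1) = 0 := by decide
  have keyA : ∀ s1 s0 a a' : ZMod 2, s1 = s0 + (a' - a) → a + s1 - s0 = a' := by decide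
  have keyB : ∀ s1 sp sm a1 a1' a2 a2' : ZMod 2,
      s1 = sm + (a1' - a1) → sp + sm = (a1' - a1) + (a2' - a2) →
      a2 + s1 - sp = a2' := by decide
  set br : ℤ → ℤ → ZMod 2 := fun x t => (A' (x,t)).1 - (A (x,t)).1 with hbr
  set bl : ℤ → ℤ → ZMod 2 := fun x t => (A' (x,t)).2 - (A (x,t)).2 with hbl
  have hF : ∀ x t : ℤ, bl x (t+1) + bl (x-1) t + br x (t+1) + br (x+1) t = 0 := by
    intro x t
    have hcong := congrFun h (x, t)
    simp only [Ffield] at hcong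
    simp only [hbr, hbl]
    exact keyF _ _ _ _ _ _ _ _ hcong
  refine ⟨fun p => S br bl p.2 p.1, ?_⟩
  funext p
  obtain ⟨x, t⟩ := p
  have hR := R br bl t x
  have hC := Cinv br bl hF t (x)
  refine Prod.ext ?_ ?_
  · simp only [GA]
    exact keyA _ _ _ _ hR
  · simp only [GA]
    exact keyB _ _ _ _ _ _ _ hR hC
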